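/- Let a₁ > a₂ > a₃ be real numbers and l ≥ 0 a real number. Define x_m² = (2/3)·(−l + a₁² + a₂² + a₃²) − (2/9)·(a₁ + a₂ + a₃)². Let x, y be real numbers with x² ≤ x_m² and (y + x/2)² = (3/4)·(x_m² − x²). If (a₁ + a₂ − 2a₃)/3 + x + y < 0, then x + (2a₁ − a₂ − a₃)/3 > 0. -/
import Mathlib


/-- The conic argument in the rank-3 case of the proof of Proposition 2:
if `par-deg E₂ = (a₁+a₂−2a₃)/3 + x + y` is negative, then
`par-deg E₁ = x + (2a₁−a₂−a₃)/3` is positive. -/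
theorem rank_three_conic_argument
    (a₁ a₂ a₃ l : ℝ) (h12 : a₂ < a₁) (h23 : a₃ < a₂) (hl : 0 ≤ l)
    (xm2 : ℝ)
    (hxm : xm2 = (2 / 3) * (-l + a₁ ^ 2 + a₂ ^ 2 + a₃ ^ 2)
        - (2 / 9) * (a₁ + a₂ + a₃) ^ 2)
    (x y : ℝ) (hx : x ^ 2 ≤ xm2)
    (hy : (y + x / 2) ^ 2 = (3 / 4) * (xm2 - x ^ 2))
    (hneg : (a₁ + a₂ - 2 * a₃) / 3 + x + y < 0) :
    0 < x + (2 * a₁ - a₂ - a₃) / 3 := by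
  by_contra h
  push_neg at h
  set q : ℝ := (2 * a₁ - a₂ - a₃) / 3 with hq
  set p : ℝ := (a₁ + a₂ - 2 * a₃) / 3 with hp
  have hu : x + q ≤ 0 := h
  have hv : (x + y) + p < 0 := by linarith
  have hpq1 : p - 2 * q < 0 := by
    simp only [hp, hq]; linarith
  have hpq2 : q - 2 * p < 0 := by
    simp only [hp, hq]; linarith
  -- form = x² + xy + y² equals (3/4) xm2
  have hform : x ^ 2 + x * y + y ^ 2 = (3 / 4) * xm2 := by nlinarith [hy]
  have hB : (3 / 4) * xm2 ≤ q ^ 2 - q * p + p ^ 2 := by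
    simp only [hp, hq, hxm]; nlinarith [hl]
  nlinarith [sq_nonneg ((x + q) - ((x + y) + p)), mul_nonneg (neg_nonneg.2 hu) (by linarith : (0:ℝ) ≤ 2 * q - p), mul_pos (by linarith : (0:ℝ) < -((x + y) + p)) (by linarith : (0:ℝ) < 2 * p - q), sq_nonneg (x + q), sq_nonneg ((x + y) + p)]
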